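/- For every real η > 0 there exists a constant C_η > 0 such that for every integer N ≥ 1 and every family (a_j)_{j ≥ -1} of nonnegative real numbers with Σ_{j ≥ -1} (2+j)^η a_j < ∞, one has Σ_{q ≥ -1} (2+q)^η Σ_{j ≥ -1, j > 3q/2 + N} 2^{-(1/2)(j - 3q/2)} a_j ≤ C_η 2^{-N/2} N^η Σ_{j ≥ -1} (2+j)^η a_j. -/

import Mathlib

open scoped ENNReal NNReal

/-- High-frequency summation estimate in the proof of Proposition 5.1: for `η > 0` there is
`C_η > 0` such that for every integer `N ≥ 1` and nonnegative `(a_j)_{j ≥ -1}` with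
`Σ_{j ≥ -1} (2+j)^η a_j < ∞`,
`Σ_{q ≥ -1} (2+q)^η Σ_{j ≥ -1, j > 3q/2 + N} 2^{-(1/2)(j-3q/2)} a_j
  ≤ C_η 2^{-N/2} N^η Σ_{j ≥ -1} (2+j)^η a_j`. -/
theorem highfreq_double_sum_estimate (η : ℝ) (hη : 0 < η) :
    ∃ C : ℝ≥0, 0 < C ∧ ∀ N : ℕ, 1 ≤ N → ∀ a : ℤ → ℝ≥0,
      (∑' j : ℤ, if -1 ≤ j then (ENNReal.ofReal (2 + (j:ℝ))) ^ η * (a j : ℝ≥0∞) else 0) < ⊤ →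
      (∑' q : ℤ, if -1 ≤ q then
          (ENNReal.ofReal (2 + (q:ℝ))) ^ η *
            ∑' j : ℤ, if -1 ≤ j ∧ 3*(q:ℝ)/2 + N < (j:ℝ) then
                ENNReal.ofReal ((2:ℝ) ^ (-(1/2 : ℝ) * ((j:ℝ) - 3*(q:ℝ)/2))) * (a j : ℝ≥0∞)
              else 0
        else 0)
      ≤ (C : ℝ≥0∞) * ENNReal.ofReal ((2:ℝ) ^ (-(N:ℝ)/2)) * (N : ℝ≥0∞) ^ η *
          ∑' j : ℤ, if -1 ≤ j then (ENNReal.ofReal (2 + (j:ℝ))) ^ η * (a j : ℝ≥0∞) else 0 := by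
  refine ⟨7, by norm_num, ?_⟩
  intro N hN a _
  -- notation
  set w : ℝ≥0∞ := ENNReal.ofReal ((2:ℝ) ^ (-(N:ℝ)/2)) with hw
  set r : ℝ≥0∞ := ENNReal.ofReal ((2:ℝ) ^ (-(1/4) : ℝ)) with hrdef
  set S : ℝ≥0∞ :=
    ∑' j : ℤ, if -1 ≤ j then (ENNReal.ofReal (2 + (j:ℝ))) ^ η * (a j : ℝ≥0∞) else 0 with hS
  set F : ℤ → ℤ → ℝ≥0∞ := fun q j =>
    if (-1 ≤ q ∧ -1 ≤ j ∧ 3*(q:ℝ)/2 + N < (j:ℝ)) then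
      (ENNReal.ofReal (2 + (q:ℝ))) ^ η *
        (ENNReal.ofReal ((2:ℝ) ^ (-(1/2 : ℝ) * ((j:ℝ) - 3*(q:ℝ)/2))) * (a j : ℝ≥0∞))
    else 0 with hF
  -- the geometric bound
  have hrle : r ≤ ENNReal.ofReal (6/7 : ℝ) := by
    apply ENNReal.ofReal_le_ofReal
    have h2 : (0:ℝ) < (2:ℝ) ^ ((1/4) : ℝ) := Real.rpow_pos_of_pos (by norm_num) _
    have h4 : ((7:ℝ)/6) ^ (4:ℕ) ≤ ((2:ℝ) ^ ((1/4):ℝ)) ^ (4:ℕ) := by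
      rw [← Real.rpow_natCast ((2:ℝ) ^ ((1/4):ℝ)) 4, ← Real.rpow_mul (by norm_num : (0:ℝ) ≤ 2)]
      norm_num
    have h76 : (7:ℝ)/6 ≤ (2:ℝ) ^ ((1/4):ℝ) :=
      le_of_pow_le_pow_left₀ (by norm_num) h2.le h4
    have : (2:ℝ) ^ (-(1/4) : ℝ) = ((2:ℝ) ^ ((1/4):ℝ))⁻¹ := by
      rw [Real.rpow_neg (by norm_num : (0:ℝ) ≤ 2)]
    rw [this]
    rw [show (6:ℝ)/7 = ((7:ℝ)/6)⁻¹ by norm_num]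
    exact inv_anti₀ (by norm_num) h76
  have hgeo : (∑' n : ℕ, r ^ n) ≤ 7 := by
    rw [ENNReal.tsum_geometric]
    have h1 : (7:ℝ≥0∞)⁻¹ ≤ 1 - r := by
      have : (7:ℝ≥0∞)⁻¹ = ENNReal.ofReal (1 - 6/7) := by
        rw [show (1:ℝ) - 6/7 = (7:ℝ)⁻¹ by norm_num, ENNReal.ofReal_inv_of_pos (by norm_num)]
        norm_num
      rw [this, show (1:ℝ≥0∞) - r = ENNReal.ofReal 1 - r by simp]
      calc ENNReal.ofReal (1 - 6/7) = ENNReal.ofReal 1 - ENNReal.ofReal (6/7) :=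
            ENNReal.ofReal_sub _ (by norm_num)
        _ ≤ ENNReal.ofReal 1 - r := tsub_le_tsub_left hrle _
    calc (1 - r)⁻¹ ≤ ((7:ℝ≥0∞)⁻¹)⁻¹ := ENNReal.inv_le_inv' h1
      _ = 7 := inv_inv _
  -- rewrite LHS as a double sum
  have hA : (∑' q : ℤ, if -1 ≤ q then
          (ENNReal.ofReal (2 + (q:ℝ))) ^ η *
            ∑' j : ℤ, if -1 ≤ j ∧ 3*(q:ℝ)/2 + N < (j:ℝ) then
                ENNReal.ofReal ((2:ℝ) ^ (-(1/2 : ℝ) * ((j:ℝ) - 3*(q:ℝ)/2))) * (a j : ℝ≥0∞)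
              else 0
        else 0) = ∑' q : ℤ, ∑' j : ℤ, F q j := by
    refine tsum_congr fun q => ?_
    by_cases hq : (-1:ℤ) ≤ q
    · rw [if_pos hq, ← ENNReal.tsum_mul_left]
      refine tsum_congr fun j => ?_
      by_cases hj : ((-1:ℤ) ≤ j ∧ 3*(q:ℝ)/2 + N < (j:ℝ))
      · rw [if_pos hj, hF]
        simp only
        rw [if_pos ⟨hq, hj⟩]
      · rw [if_neg hj, mul_zero, hF]
        simp only
        rw [if_neg (fun h => hj h.2)]
    · rw [if_neg hq]
      have hz : ∀ j, F q j = 0 := fun j => if_neg (fun h => hq h.1)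
      exact ((tsum_congr hz).trans tsum_zero).symm
  -- key per-j estimate
  have key : ∀ j : ℤ, (∑' q : ℤ, F q j) ≤
      (7 * w) * (if -1 ≤ j then (ENNReal.ofReal (2 + (j:ℝ))) ^ η * (a j : ℝ≥0∞) else 0) := by
    intro j
    by_cases hj : (-1:ℤ) ≤ j
    · rw [if_pos hj]
      set G : ℤ → ℝ≥0∞ := fun m =>
        if 1 ≤ m then ENNReal.ofReal ((2:ℝ) ^ (-(m:ℝ)/4)) else 0 with hG
      set c : ℝ≥0∞ := (ENNReal.ofReal (2 + (j:ℝ))) ^ η * (a j : ℝ≥0∞) * w with hc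
      have step1 : ∀ q : ℤ, F q j ≤ c * G (2*j - 3*q - 2*N) := by
        intro q
        by_cases hcond : (-1 ≤ q ∧ -1 ≤ j ∧ 3*(q:ℝ)/2 + N < (j:ℝ))
        · obtain ⟨hq, -, hlt⟩ := hcond
          have hqR : (-1:ℝ) ≤ (q:ℝ) := by exact_mod_cast hq
          have hNR : (1:ℝ) ≤ (N:ℝ) := by exact_mod_cast hN
          have hqj : (q:ℝ) ≤ (j:ℝ) := by linarith
          have hm1 : (1:ℤ) ≤ 2*j - 3*q - 2*N := by
            have hz : (3*(q:ℝ) + 2*(N:ℝ)) < 2*(j:ℝ) := by linarith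
            have : (3*q + 2*(N:ℤ)) < 2*j := by exact_mod_cast hz
            linarith
          have hsplit : (2:ℝ) ^ (-(1/2 : ℝ) * ((j:ℝ) - 3*(q:ℝ)/2)) =
              (2:ℝ) ^ (-(N:ℝ)/2) * (2:ℝ) ^ (-(((2*j - 3*q - 2*(N:ℤ)):ℤ):ℝ)/4) := by
            rw [← Real.rpow_add (by norm_num : (0:ℝ) < 2)]
            congr 1
            push_cast
            ring_nf
          rw [hF]
          simp only
          rw [if_pos ⟨hq, hj, hlt⟩, hG]
          simp only
          rw [if_pos hm1, hc, hw]
          rw [hsplit, ENNReal.ofReal_mul (Real.rpow_nonneg (by norm_num) _)]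
          have hmono : (ENNReal.ofReal (2 + (q:ℝ))) ^ η ≤ (ENNReal.ofReal (2 + (j:ℝ))) ^ η :=
            ENNReal.rpow_le_rpow (ENNReal.ofReal_le_ofReal (by linarith)) hη.le
          calc (ENNReal.ofReal (2 + (q:ℝ))) ^ η *
                (ENNReal.ofReal ((2:ℝ) ^ (-(N:ℝ)/2)) *
                  ENNReal.ofReal ((2:ℝ) ^ (-(((2*j - 3*q - 2*(N:ℤ)):ℤ):ℝ)/4)) * (a j : ℝ≥0∞))
              ≤ (ENNReal.ofReal (2 + (j:ℝ))) ^ η *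
                (ENNReal.ofReal ((2:ℝ) ^ (-(N:ℝ)/2)) *
                  ENNReal.ofReal ((2:ℝ) ^ (-(((2*j - 3*q - 2*(N:ℤ)):ℤ):ℝ)/4)) * (a j : ℝ≥0∞)) :=
                mul_le_mul_left hmono _
            _ = (ENNReal.ofReal (2 + (j:ℝ))) ^ η * (a j : ℝ≥0∞) *
                  ENNReal.ofReal ((2:ℝ) ^ (-(N:ℝ)/2)) *
                  ENNReal.ofReal ((2:ℝ) ^ (-(((2*j - 3*q - 2*(N:ℤ)):ℤ):ℝ)/4)) := by ring
        · rw [hF]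
          simp only
          rw [if_neg hcond]
          exact zero_le
      have hinj : Function.Injective (fun q : ℤ => 2*j - 3*q - 2*(N:ℤ)) := by
        intro x y h
        simp only at h
        omega
      have step2 : (∑' q : ℤ, F q j) ≤ c * ∑' m : ℤ, G m := by
        calc (∑' q : ℤ, F q j) ≤ ∑' q : ℤ, c * G (2*j - 3*q - 2*N) := ENNReal.tsum_le_tsum step1
          _ = c * ∑' q : ℤ, G (2*j - 3*q - 2*N) := ENNReal.tsum_mul_left
          _ ≤ c * ∑' m : ℤ, G m :=
              mul_le_mul_right (ENNReal.tsum_comp_le_tsum_of_injective hinj G) _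
      have step3 : (∑' m : ℤ, G m) ≤ 7 := by
        have hneg : ∀ n : ℕ, G (-((n:ℤ) + 1)) = 0 := by
          intro n
          rw [hG]
          simp only
          rw [if_neg (by omega)]
        have hsum : (∑' m : ℤ, G m) = ∑' n : ℕ, G n := by
          rw [tsum_of_nat_of_neg_add_one ENNReal.summable ENNReal.summable,
            (tsum_congr hneg).trans tsum_zero, add_zero]
        rw [hsum]
        refine le_trans (ENNReal.tsum_le_tsum fun n => ?_) hgeo
        by_cases hn : (1:ℤ) ≤ (n:ℤ)
        · rw [hG]
          simp only
          rw [if_pos hn, hrdef, ← ENNReal.ofReal_pow (Real.rpow_nonneg (by norm_num) _),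
            ← Real.rpow_natCast ((2:ℝ) ^ (-(1/4):ℝ)) n,
            ← Real.rpow_mul (by norm_num : (0:ℝ) ≤ 2)]
          apply le_of_eq
          congr 1
          push_cast
          ring
        · rw [hG]
          simp only
          rw [if_neg hn]
          exact zero_le
      calc (∑' q : ℤ, F q j) ≤ c * ∑' m : ℤ, G m := step2
        _ ≤ c * 7 := mul_le_mul_right step3 _
        _ = (7 * w) * ((ENNReal.ofReal (2 + (j:ℝ))) ^ η * (a j : ℝ≥0∞)) := by rw [hc]; ring
    · have hz : ∀ q, F q j = 0 := fun q => if_neg (fun h => hj h.2.1)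
      rw [if_neg hj, mul_zero, (tsum_congr hz).trans tsum_zero]
  -- conclusion
  have hNpow : (1:ℝ≥0∞) ≤ (N : ℝ≥0∞) ^ η := by
    calc (1:ℝ≥0∞) = 1 ^ η := (ENNReal.one_rpow η).symm
      _ ≤ (N : ℝ≥0∞) ^ η :=
        ENNReal.rpow_le_rpow (by exact_mod_cast hN) hη.le
  have h7 : ((7:ℝ≥0) : ℝ≥0∞) = 7 := by norm_num
  calc (∑' q : ℤ, if -1 ≤ q then
          (ENNReal.ofReal (2 + (q:ℝ))) ^ η *
            ∑' j : ℤ, if -1 ≤ j ∧ 3*(q:ℝ)/2 + N < (j:ℝ) then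
                ENNReal.ofReal ((2:ℝ) ^ (-(1/2 : ℝ) * ((j:ℝ) - 3*(q:ℝ)/2))) * (a j : ℝ≥0∞)
              else 0
        else 0)
      = ∑' q : ℤ, ∑' j : ℤ, F q j := hA
    _ = ∑' j : ℤ, ∑' q : ℤ, F q j := ENNReal.tsum_comm
    _ ≤ ∑' j : ℤ, (7 * w) *
          (if -1 ≤ j then (ENNReal.ofReal (2 + (j:ℝ))) ^ η * (a j : ℝ≥0∞) else 0) :=
        ENNReal.tsum_le_tsum key
    _ = (7 * w) * S := ENNReal.tsum_mul_left
    _ = (7 * w) * 1 * S := by rw [mul_one]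
    _ ≤ (7 * w) * (N : ℝ≥0∞) ^ η * S := by
        exact mul_le_mul_left (mul_le_mul_right hNpow _) _
    _ = ((7:ℝ≥0) : ℝ≥0∞) * w * (N : ℝ≥0∞) ^ η * S := by rw [h7]
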